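/- Let P be the Petersen graph and G = ⟨(ab)⟩ ⊂ S₅ = Aut(P) the order-2 subgroup generated by a transposition. Then |Jac(P)| = 2000, |Jac(P//G)| = 100 with Jac(P//G) ≅ (ℤ/10ℤ)², and the kernel of the pushforward p_* : Jac(P) → Jac(P//G) has order 20. -/

import Mathlib

open Finset

/-- Connectivity of a multigraph presented by endpoint maps `s t : E → V`. -/
def GraphConnected {V E : Type*} (s t : E → V) : Prop :=
  ∀ u v : V, Relation.ReflTransGen
    (fun a b => ∃ e, (s e = a ∧ t e = b) ∨ (s e = b ∧ t e = a)) u v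

/-- Weighted (graph of groups) Laplacian matrix: the `(u,v)` entry is the coefficient
of `u` in `L(v)`, where firing `v` sends `c(v)/c(e)` chips along each edge `e` at `v`.
Loops contribute zero automatically. -/
def gogLap {V E : Type*} [Fintype E] [DecidableEq V]
    (s t : E → V) (cV : V → ℕ) (cE : E → ℕ) : Matrix V V ℤ :=
  Matrix.of fun u v => ∑ e : E, ((cV v / cE e : ℕ) : ℤ) *
    (((if s e = v then (1 : ℤ) else 0) - (if t e = v then 1 else 0)) *
     ((if s e = u then (1 : ℤ) else 0) - (if t e = u then 1 else 0)))

/-- Degree (sum of coefficients) of a divisor, as a linear map. -/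
def degHom (V : Type*) [Fintype V] : (V → ℤ) →ₗ[ℤ] ℤ where
  toFun d := ∑ v, d v
  map_add' x y := Finset.sum_add_distrib
  map_smul' c x := by simp [Finset.mul_sum]

/-- The Jacobian of the weighted graph: degree-zero divisors modulo the image of the
weighted Laplacian. -/
abbrev gogJac {V E : Type*} [Fintype V] [Fintype E] [DecidableEq V]
    (s t : E → V) (cV : V → ℕ) (cE : E → ℕ) :=
  LinearMap.ker (degHom V) ⧸
    Submodule.comap (LinearMap.ker (degHom V)).subtype
      (LinearMap.range (gogLap s t cV cE).mulVecLin)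

/-- A spanning tree of the multigraph, given as a set of edges: it connects all
vertices and has `|V| - 1` edges. -/
def IsSpanningTree {V E : Type*} [Fintype V] (s t : E → V) (F : Finset E) : Prop :=
  (∀ u v : V, Relation.ReflTransGen
      (fun a b => ∃ e ∈ F, (s e = a ∧ t e = b) ∨ (s e = b ∧ t e = a)) u v) ∧
  F.card + 1 = Fintype.card V

/-- Pushforward of divisors along a map of vertex sets: add up the chips in each fiber. -/
def pushV {V W : Type*} [Fintype V] [DecidableEq W] (p : V → W) (d : V → ℤ) : W → ℤ :=
  fun w => ∑ v ∈ Finset.univ.filter (fun v => p v = w), d v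


namespace Stmt19Aux

/-! ### Generic machinery -/

/-- diagonal-ish rectangular matrix -/
def diagM (n m : ℕ) (d : Fin n → ℕ) : Matrix (Fin n) (Fin m) ℤ :=
  Matrix.of fun i j => if (j : ℕ) = (i : ℕ) then (d i : ℤ) else 0

noncomputable def quotEquivOfSNF {n m : ℕ} (A D : Matrix (Fin n) (Fin m) ℤ)
    (U U' : Matrix (Fin n) (Fin n) ℤ) (V V' : Matrix (Fin m) (Fin m) ℤ)
    (hUU' : U * U' = 1) (hU'U : U' * U = 1) (hVV' : V * V' = 1)
    (hD : U * A * V = D) :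
    ((Fin n → ℤ) ⧸ LinearMap.range A.mulVecLin) ≃ₗ[ℤ]
      ((Fin n → ℤ) ⧸ LinearMap.range D.mulVecLin) := by
  refine Submodule.Quotient.equiv _ _
    (LinearEquiv.ofLinear U.mulVecLin U'.mulVecLin ?_ ?_) ?_
  · rw [← Matrix.mulVecLin_mul, hUU', Matrix.mulVecLin_one]
  · rw [← Matrix.mulVecLin_mul, hU'U, Matrix.mulVecLin_one]
  · have hVsurj : Function.Surjective V.mulVecLin := by
      intro x
      exact ⟨V'.mulVecLin x, by
        simp only [Matrix.mulVecLin_apply, Matrix.mulVec_mulVec, hVV', Matrix.one_mulVec]⟩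
    have h1 : Submodule.map U.mulVecLin (LinearMap.range A.mulVecLin)
        = LinearMap.range ((U * A).mulVecLin) := by
      rw [Matrix.mulVecLin_mul, LinearMap.range_comp]
    have h2 : LinearMap.range ((U * A * V)).mulVecLin
        = LinearMap.range ((U * A).mulVecLin) := by
      rw [Matrix.mulVecLin_mul, LinearMap.range_comp,
        LinearMap.range_eq_top.mpr hVsurj, Submodule.map_top]
    show Submodule.map U.mulVecLin (LinearMap.range A.mulVecLin) = _
    rw [h1, ← hD, h2]

noncomputable def diagQuotEquiv (n m : ℕ) (h : n ≤ m) (d : Fin n → ℕ) (hd : ∀ i, d i ≠ 0) :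
    ((Fin n → ℤ) ⧸ LinearMap.range (diagM n m d).mulVecLin) ≃ₗ[ℤ] (∀ i, ZMod (d i)) := by
  classical
  let g : (Fin n → ℤ) →ₗ[ℤ] (∀ i, ZMod (d i)) :=
    LinearMap.pi fun i => (Int.castAddHom (ZMod (d i))).toIntLinearMap ∘ₗ LinearMap.proj i
  have hg : ∀ (x : Fin n → ℤ) (i : Fin n), g x i = ((x i : ℤ) : ZMod (d i)) := fun x i => rfl
  have hmv : ∀ (y : Fin m → ℤ) (i : Fin n),
      (diagM n m d).mulVec y i = (d i : ℤ) * y (Fin.castLE h i) := by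
    intro y i
    rw [Matrix.mulVec, dotProduct]
    rw [Finset.sum_eq_single (Fin.castLE h i)]
    · simp [diagM]
    · intro j _ hj
      have : (j : ℕ) ≠ (i : ℕ) := by
        intro hc; apply hj; apply Fin.ext; simpa using hc
      simp [diagM, this]
    · simp
  have hker : LinearMap.range (diagM n m d).mulVecLin = LinearMap.ker g := by
    ext x
    constructor
    · rintro ⟨y, rfl⟩
      rw [LinearMap.mem_ker]
      funext i
      rw [hg, Matrix.mulVecLin_apply, hmv]
      push_cast
      simp
    · intro hx
      rw [LinearMap.mem_ker] at hx
      refine ⟨fun j => if hj : (j : ℕ) < n then x ⟨j, hj⟩ / (d ⟨j, hj⟩ : ℤ) else 0, ?_⟩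
      rw [Matrix.mulVecLin_apply]
      funext i
      rw [hmv]
      have hcast : (Fin.castLE h i : ℕ) < n := i.isLt
      rw [dif_pos hcast]
      have hdvd : ((d i : ℤ)) ∣ x i := by
        have := congrFun hx i
        rw [hg] at this
        exact (ZMod.intCast_zmod_eq_zero_iff_dvd _ _).mp this
      have hfin : (⟨(Fin.castLE h i : ℕ), hcast⟩ : Fin n) = i := by
        apply Fin.ext; simp
      rw [hfin]
      exact Int.mul_ediv_cancel' hdvd
  have hgsurj : Function.Surjective g := by
    intro f
    refine ⟨fun i => ((f i).val : ℤ), ?_⟩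
    funext i
    rw [hg]
    haveI : NeZero (d i) := ⟨hd i⟩
    push_cast
    simp [ZMod.natCast_val, ZMod.cast_id]
  exact (Submodule.quotEquivOfEq _ _ hker).trans (g.quotKerEquivOfSurjective hgsurj)

def delta0 {n : ℕ} : Fin (n + 1) → ℤ := fun u => if u = 0 then 1 else 0

def aug {n : ℕ} (L : Matrix (Fin (n + 1)) (Fin (n + 1)) ℤ) :
    Matrix (Fin (n + 1)) (Fin (n + 2)) ℤ :=
  Matrix.of fun u j => Fin.cases (delta0 u) (fun j' => L u j') j

lemma deg_apply {V : Type*} [Fintype V] (x : V → ℤ) : degHom V x = ∑ v, x v := rfl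

lemma deg_delta0 {n : ℕ} : degHom (Fin (n + 1)) (delta0 (n := n)) = 1 := by
  rw [deg_apply]
  simp [delta0]

lemma deg_mulVec {n : ℕ} (L : Matrix (Fin (n + 1)) (Fin (n + 1)) ℤ)
    (hcol : ∀ v, ∑ u, L u v = 0) (z : Fin (n + 1) → ℤ) :
    degHom (Fin (n + 1)) (L.mulVec z) = 0 := by
  rw [deg_apply]
  simp only [Matrix.mulVec, dotProduct]
  rw [Finset.sum_comm]
  refine Finset.sum_eq_zero fun v _ => ?_
  rw [← Finset.sum_mul, hcol, zero_mul]

lemma deg_mulVec_colsum {a b : ℕ} (M : Matrix (Fin a) (Fin b) ℤ)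
    (hcol : ∀ v, ∑ u, M u v = 1) (z : Fin b → ℤ) :
    degHom (Fin a) (M.mulVec z) = degHom (Fin b) z := by
  rw [deg_apply, deg_apply]
  simp only [Matrix.mulVec, dotProduct]
  rw [Finset.sum_comm]
  refine Finset.sum_congr rfl fun v _ => ?_
  rw [← Finset.sum_mul, hcol, one_mul]

lemma aug_mulVec {n : ℕ} (L : Matrix (Fin (n + 1)) (Fin (n + 1)) ℤ)
    (y : Fin (n + 2) → ℤ) :
    (aug L).mulVec y = y 0 • delta0 + L.mulVec (fun j => y j.succ) := by
  funext u
  simp only [Matrix.mulVec, dotProduct, Pi.add_apply, Pi.smul_apply, smul_eq_mul]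
  rw [Fin.sum_univ_succ]
  simp only [aug, Matrix.of_apply, Fin.cases_zero, Fin.cases_succ]
  ring

noncomputable def jacEquivAug {n : ℕ} (L : Matrix (Fin (n + 1)) (Fin (n + 1)) ℤ)
    (hcol : ∀ v, ∑ u, L u v = 0) :
    (LinearMap.ker (degHom (Fin (n + 1))) ⧸
      Submodule.comap (LinearMap.ker (degHom (Fin (n + 1)))).subtype
        (LinearMap.range L.mulVecLin)) ≃ₗ[ℤ]
    ((Fin (n + 1) → ℤ) ⧸ LinearMap.range (aug L).mulVecLin) := by
  set N := LinearMap.range (aug L).mulVecLin with hN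
  let g : LinearMap.ker (degHom (Fin (n + 1))) →ₗ[ℤ] ((Fin (n + 1) → ℤ) ⧸ N) :=
    N.mkQ ∘ₗ (LinearMap.ker (degHom (Fin (n + 1)))).subtype
  have hker : Submodule.comap (LinearMap.ker (degHom (Fin (n + 1)))).subtype
      (LinearMap.range L.mulVecLin) = LinearMap.ker g := by
    ext x
    simp only [Submodule.mem_comap, LinearMap.mem_range, LinearMap.mem_ker,
      LinearMap.coe_comp, Function.comp_apply, Submodule.coe_subtype, g,
      Submodule.mkQ_apply, Submodule.Quotient.mk_eq_zero, hN]
    constructor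
    · rintro ⟨z, hz⟩
      refine ⟨Fin.cons 0 z, ?_⟩
      rw [Matrix.mulVecLin_apply, aug_mulVec]
      simp only [Fin.cons_zero, zero_smul, zero_add, Fin.cons_succ]
      exact hz
    · rintro ⟨y, hy⟩
      rw [Matrix.mulVecLin_apply, aug_mulVec] at hy
      have hdeg : degHom (Fin (n + 1)) (x : Fin (n + 1) → ℤ) = 0 := x.2
      have := congrArg (degHom (Fin (n + 1))) hy
      rw [map_add, map_smul, deg_delta0, deg_mulVec L hcol, hdeg, add_zero,
        smul_eq_mul, mul_one] at this
      refine ⟨fun j => y j.succ, ?_⟩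
      rw [Matrix.mulVecLin_apply, ← hy, this, zero_smul, zero_add]
  have hsurj : Function.Surjective g := by
    intro q
    obtain ⟨x, rfl⟩ := N.mkQ_surjective q
    set c := degHom (Fin (n + 1)) x with hc
    have hx' : degHom (Fin (n + 1)) (x - c • delta0) = 0 := by
      rw [map_sub, map_smul, deg_delta0, smul_eq_mul, mul_one, sub_self]
    refine ⟨⟨x - c • delta0, hx'⟩, ?_⟩
    show N.mkQ (x - c • delta0) = N.mkQ x
    rw [Submodule.mkQ_apply, Submodule.mkQ_apply, Submodule.Quotient.eq]
    refine ⟨Fin.cons (-c) 0, ?_⟩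
    rw [Matrix.mulVecLin_apply, aug_mulVec]
    simp only [Fin.cons_zero, Fin.cons_succ, Pi.zero_apply]
    funext u
    simp only [Pi.add_apply, Pi.sub_apply, Pi.smul_apply, smul_eq_mul,
      Matrix.mulVec, dotProduct, mul_zero, Finset.sum_const_zero]
    ring
  exact (Submodule.quotEquivOfEq _ _ hker).trans (g.quotKerEquivOfSurjective hsurj)

/-! ### Concrete data -/

def LP : Matrix (Fin 10) (Fin 10) ℤ :=
  !![3, 0, 0, 0, 0, 0, 0, -1, -1, -1;
   0, 3, 0, 0, 0, -1, -1, 0, 0, -1;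
   0, 0, 3, 0, -1, 0, -1, 0, -1, 0;
   0, 0, 0, 3, -1, -1, 0, -1, 0, 0;
   0, 0, -1, -1, 3, 0, 0, 0, 0, -1;
   0, -1, 0, -1, 0, 3, 0, 0, -1, 0;
   0, -1, -1, 0, 0, 0, 3, -1, 0, 0;
   -1, 0, 0, -1, 0, 0, -1, 3, 0, 0;
   -1, 0, -1, 0, 0, -1, 0, 0, 3, 0;
   -1, -1, 0, 0, -1, 0, 0, 0, 0, 3]

def LQ : Matrix (Fin 7) (Fin 7) ℤ :=
  !![3, -1, -1, -1, 0, 0, 0;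
   -1, 3, 0, 0, 0, 0, -1;
   -1, 0, 3, 0, 0, -1, 0;
   -1, 0, 0, 3, -1, 0, 0;
   0, 0, 0, -2, 3, -1, -1;
   0, 0, -2, 0, -1, 3, -1;
   0, -2, 0, 0, -1, -1, 3]

def UP : Matrix (Fin 10) (Fin 10) ℤ :=
  !![1, 0, 0, 0, 0, 0, 0, 0, 0, 0;
   0, -1, 0, 0, 0, 0, 0, 0, 0, 0;
   0, 0, -1, 0, 0, 0, 0, 0, 0, 0;
   0, 1, 1, -1, 0, 0, 0, 0, 0, 0;
   0, 0, -3, 0, -1, 0, 0, 0, 0, 0;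
   0, 3, -21, -3, -8, 0, 0, -1, 0, 0;
   0, 1, -8, -1, -3, 0, 1, 0, 0, 0;
   0, 1, -29, -4, -11, -1, 4, 0, 0, 0;
   0, -1, 3, 0, 1, 0, -3, -1, 1, 0;
   0, -2, -1, -1, -1, 0, -5, -2, 3, -1]

def UPi : Matrix (Fin 10) (Fin 10) ℤ :=
  !![1, 0, 0, 0, 0, 0, 0, 0, 0, 0;
   0, -1, 0, 0, 0, 0, 0, 0, 0, 0;
   0, 0, -1, 0, 0, 0, 0, 0, 0, 0;
   0, -1, -1, -1, 0, 0, 0, 0, 0, 0;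
   0, 0, 3, 0, -1, 0, 0, 0, 0, 0;
   0, 3, 0, 0, -1, 0, 4, -1, 0, 0;
   0, 0, 0, -1, -3, 0, 1, 0, 0, 0;
   0, 0, 0, 3, 8, -1, 0, 0, 0, 0;
   0, -1, 0, 0, 0, -1, 3, 0, 1, 0;
   0, 0, -1, 0, 0, -1, 4, 0, 3, -1]

def VP : Matrix (Fin 11) (Fin 11) ℤ :=
  !![1, 0, 0, 1, 3, -3, 24, -10, 40, -10, 0;
   0, 0, 0, 0, 0, 1, -9, 4, -12, 3, 1;
   0, 0, 0, 0, 0, 0, 1, -1, 3, -1, 1;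
   0, 0, 0, 0, 0, 0, 0, 0, 1, 0, 1;
   0, 0, 0, 0, 1, 0, 0, -1, 0, 0, 1;
   0, 0, 1, 0, 0, 0, 0, 0, 3, -1, 1;
   0, 1, 0, 0, 0, 0, 3, -4, 1, 0, 1;
   0, 0, 0, 0, 0, 0, 0, 0, 0, 0, 1;
   0, 0, 0, 1, 3, 0, -3, 1, -4, 1, 1;
   0, 0, 0, 0, 0, 0, 0, 0, 0, 1, 1;
   0, 0, 0, 0, 0, 0, 0, 1, 8, -3, 1]

def VPi : Matrix (Fin 11) (Fin 11) ℤ :=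
  !![1, 3, 0, 0, 0, 0, 0, 0, -1, -1, -1;
   0, 0, -3, 0, 0, 0, 1, 1, 0, 0, 1;
   0, 0, 0, -3, 0, 1, 0, 1, 0, 1, 0;
   0, 0, 3, 3, -3, 0, 0, -2, 1, -1, -1;
   0, 0, 0, -8, 1, 0, 0, 3, 0, 3, 1;
   0, 1, 9, -55, 0, 0, 0, 19, 0, 21, 5;
   0, 0, 1, -11, 0, 0, 0, 5, 0, 4, 1;
   0, 0, 0, -8, 0, 0, 0, 4, 0, 3, 1;
   0, 0, 0, 1, 0, 0, 0, -1, 0, 0, 0;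
   0, 0, 0, 0, 0, 0, 0, -1, 0, 1, 0;
   0, 0, 0, 0, 0, 0, 0, 1, 0, 0, 0]

def UQ : Matrix (Fin 7) (Fin 7) ℤ :=
  !![1, 0, 0, 0, 0, 0, 0;
   0, -1, 0, 0, 0, 0, 0;
   0, 1, -1, 0, 0, 0, 0;
   0, 1, 0, -1, 0, 0, 0;
   0, -2, -1, 3, 1, 0, 0;
   0, 0, 4, -4, -1, 1, 0;
   0, 4, 0, -4, -1, 0, 1]

def UQi : Matrix (Fin 7) (Fin 7) ℤ :=
  !![1, 0, 0, 0, 0, 0, 0;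
   0, -1, 0, 0, 0, 0, 0;
   0, -1, -1, 0, 0, 0, 0;
   0, -1, 0, -1, 0, 0, 0;
   0, 0, -1, 3, 1, 0, 0;
   0, 0, 3, -1, 1, 1, 0;
   0, 0, -1, -1, 1, 0, 1]

def VQ : Matrix (Fin 8) (Fin 8) ℤ :=
  !![1, -3, 0, 0, 3, 10, 10, 0;
   0, 1, 0, 0, -1, -3, -3, 1;
   0, 0, 0, 0, 0, 0, 1, 1;
   0, 0, 0, 0, 0, 1, 0, 1;
   0, 0, 0, 0, 0, 0, 0, 1;
   0, 0, 0, 1, 1, 3, 3, 2;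
   0, 0, 1, 0, 1, 6, 3, 2;
   0, 0, 0, 0, 1, 3, 6, 2]

def VQi : Matrix (Fin 8) (Fin 8) ℤ :=
  !![1, 3, -1, -1, -1, 0, 0, 0;
   0, 1, -3, 0, 0, 0, 0, 1;
   0, 0, 3, -3, 0, 0, 1, -1;
   0, 0, 3, 0, -3, 1, 0, -1;
   0, 0, -6, -3, 7, 0, 0, 1;
   0, 0, 0, 1, -1, 0, 0, 0;
   0, 0, 1, 0, -1, 0, 0, 0;
   0, 0, 0, 0, 1, 0, 0, 0]

def Mmat : Matrix (Fin 7) (Fin 10) ℤ :=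
  !![0, 0, 0, 0, 0, 0, 0, 0, 0, 0;
   -1, 0, 0, 0, 0, 0, 0, 1, 0, 0;
   -1, 0, 0, 0, 0, 0, 0, 0, 1, 0;
   -1, 0, 0, 0, 0, 0, 0, 0, 0, 1;
   -2, 1, 0, 0, 1, 0, 0, 0, 0, 0;
   -2, 0, 1, 0, 0, 1, 0, 0, 0, 0;
   -2, 0, 0, 1, 0, 0, 1, 0, 0, 0]



def dP : Fin 10 → ℕ := fun i => if (i : ℕ) < 6 then 1 else if (i : ℕ) = 6 then 2 else 10
def dQ : Fin 7 → ℕ := fun i => if (i : ℕ) < 5 then 1 else 10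

def pfun : Fin 10 → Fin 7 := ![0, 4, 5, 6, 4, 5, 6, 1, 2, 3]

def PM : Matrix (Fin 7) (Fin 10) ℤ := Matrix.of fun w v => if pfun v = w then 1 else 0

def SM : Matrix (Fin 10) (Fin 7) ℤ :=
  !![1, 0, 0, 0, 0, 0, 0;
   0, 0, 0, 0, 1, 0, 0;
   0, 0, 0, 0, 0, 1, 0;
   0, 0, 0, 0, 0, 0, 1;
   0, 0, 0, 0, 0, 0, 0;
   0, 0, 0, 0, 0, 0, 0;
   0, 0, 0, 0, 0, 0, 0;
   0, 1, 0, 0, 0, 0, 0;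
   0, 0, 1, 0, 0, 0, 0;
   0, 0, 0, 1, 0, 0, 0]

lemma snfP : UP * aug LP * VP = diagM 10 11 dP := by decide
lemma snfQ : UQ * aug LQ * VQ = diagM 7 8 dQ := by decide
lemma hUP : UP * UPi = 1 := by decide
lemma hUPi : UPi * UP = 1 := by decide
lemma hVP : VP * VPi = 1 := by decide
lemma hUQ : UQ * UQi = 1 := by decide
lemma hUQi : UQi * UQ = 1 := by decide
lemma hVQ : VQ * VQi = 1 := by decide
lemma hcolP : ∀ v, ∑ u, LP u v = 0 := by decide
lemma hcolQ : ∀ v, ∑ u, LQ u v = 0 := by decide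
lemma hPMLP : PM * LP = LQ * Mmat := by decide
lemma hcolPM : ∀ v, ∑ w, PM w v = 1 := by decide
lemma hcolSM : ∀ v, ∑ u, SM u v = 1 := by decide
lemma hPMSM : PM * SM = 1 := by decide

noncomputable def eP : (LinearMap.ker (degHom (Fin 10)) ⧸
      Submodule.comap (LinearMap.ker (degHom (Fin 10))).subtype
        (LinearMap.range LP.mulVecLin)) ≃ₗ[ℤ] (∀ i, ZMod (dP i)) :=
  (jacEquivAug LP hcolP).trans
    ((quotEquivOfSNF (aug LP) (diagM 10 11 dP) UP UPi VP VPi hUP hUPi hVP snfP).trans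
      (diagQuotEquiv 10 11 (by norm_num) dP (by decide)))

noncomputable def eQ : (LinearMap.ker (degHom (Fin 7)) ⧸
      Submodule.comap (LinearMap.ker (degHom (Fin 7))).subtype
        (LinearMap.range LQ.mulVecLin)) ≃ₗ[ℤ] (∀ i, ZMod (dQ i)) :=
  (jacEquivAug LQ hcolQ).trans
    ((quotEquivOfSNF (aug LQ) (diagM 7 8 dQ) UQ UQi VQ VQi hUQ hUQi hVQ snfQ).trans
      (diagQuotEquiv 7 8 (by norm_num) dQ (by decide)))

lemma cardPiP : Nat.card (∀ i, ZMod (dP i)) = 2000 := by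
  rw [Nat.card_pi]
  simp only [Nat.card_zmod]
  decide

lemma cardPiQ : Nat.card (∀ i, ZMod (dQ i)) = 100 := by
  rw [Nat.card_pi]
  simp only [Nat.card_zmod]
  decide

def mkQvec (a : ZMod 10 × ZMod 10) : ∀ i : Fin 7, ZMod (dQ i) :=
  Pi.single (M := fun i => ZMod (dQ i)) 5 (a.1 : ZMod (dQ 5)) +
    Pi.single (M := fun i => ZMod (dQ i)) 6 (a.2 : ZMod (dQ 6))

lemma mkQvec_5 (a : ZMod 10 × ZMod 10) : mkQvec a 5 = (a.1 : ZMod (dQ 5)) := by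
  rw [mkQvec, Pi.add_apply]
  exact (congrArg₂ (· + ·) (Pi.single_eq_same (M := fun i => ZMod (dQ i)) _ _) (Pi.single_eq_of_ne (M := fun i => ZMod (dQ i)) (by decide) _)).trans (add_zero _)

lemma mkQvec_6 (a : ZMod 10 × ZMod 10) : mkQvec a 6 = (a.2 : ZMod (dQ 6)) := by
  rw [mkQvec, Pi.add_apply]
  exact (congrArg₂ (· + ·) (Pi.single_eq_of_ne (M := fun i => ZMod (dQ i)) (by decide) _) (Pi.single_eq_same (M := fun i => ZMod (dQ i)) _ _)).trans (zero_add _)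

def lastTwo : (∀ i : Fin 7, ZMod (dQ i)) ≃+ ZMod 10 × ZMod 10 where
  toFun f := (f 5, f 6)
  invFun a := mkQvec a
  left_inv f := by
    funext i
    fin_cases i
    · exact @Subsingleton.elim (ZMod 1) _ _ _
    · exact @Subsingleton.elim (ZMod 1) _ _ _
    · exact @Subsingleton.elim (ZMod 1) _ _ _
    · exact @Subsingleton.elim (ZMod 1) _ _ _
    · exact @Subsingleton.elim (ZMod 1) _ _ _
    · exact mkQvec_5 (f 5, f 6)
    · exact mkQvec_6 (f 5, f 6)
  right_inv a := Prod.ext (mkQvec_5 a) (mkQvec_6 a)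
  map_add' f g := rfl

lemma pushV_eq (d : Fin 10 → ℤ) :
    pushV (![0, 4, 5, 6, 4, 5, 6, 1, 2, 3] : Fin 10 → Fin 7) d = PM.mulVec d := by
  show pushV pfun d = PM.mulVec d
  funext w
  rw [pushV, Finset.sum_filter, Matrix.mulVec, dotProduct]
  refine Finset.sum_congr rfl fun v _ => ?_
  by_cases h : pfun v = w <;> simp [PM, h]

noncomputable def Φ : LinearMap.ker (degHom (Fin 10)) →ₗ[ℤ] LinearMap.ker (degHom (Fin 7)) :=
  PM.mulVecLin.restrict (p := LinearMap.ker (degHom (Fin 10)))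
    (q := LinearMap.ker (degHom (Fin 7))) (fun x hx => by
      rw [LinearMap.mem_ker] at hx ⊢
      rw [Matrix.mulVecLin_apply, deg_mulVec_colsum PM hcolPM, hx])

lemma Φ_apply (x : LinearMap.ker (degHom (Fin 10))) :
    (Φ x : Fin 7 → ℤ) = PM.mulVec (x : Fin 10 → ℤ) := rfl

end Stmt19Aux

/-- the Petersen graph `P` (vertices = 2-element subsets of {a,b,c,d,e},
indexed `0:ab, 1:ac, 2:ad, 3:ae, 4:bc, 5:bd, 6:be, 7:cd, 8:ce, 9:de`; edges between
disjoint pairs) and its quotient graph of groups by `G = ⟨(ab)⟩`, with quotient vertices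
`0:ab, 1:cd, 2:ce, 3:de` (weight 2) and `4:ac, 5:ad, 6:ae` (weight 1), dilated edges
`ab-cd, ab-ce, ab-de` of weight 2 and six undilated edges of weight 1.  Then
`|Jac(P)| = 2000`, `Jac(P//G) ≅ (ℤ/10ℤ)²` of order 100, and the kernel of the
pushforward `p_* : Jac(P) → Jac(P//G)` has order 20. -/
theorem stmt19
    (sP tP : Fin 15 → Fin 10) (cVP : Fin 10 → ℕ) (cEP : Fin 15 → ℕ)
    (hsP : sP = ![0, 0, 0, 1, 1, 1, 2, 2, 2, 3, 3, 3, 4, 5, 6])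
    (htP : tP = ![7, 8, 9, 5, 6, 9, 4, 6, 8, 4, 5, 7, 9, 8, 7])
    (hcVP : cVP = fun _ => 1) (hcEP : cEP = fun _ => 1)
    (sQ tQ : Fin 9 → Fin 7) (cVQ : Fin 7 → ℕ) (cEQ : Fin 9 → ℕ)
    (hsQ : sQ = ![0, 0, 0, 4, 4, 4, 5, 5, 6])
    (htQ : tQ = ![1, 2, 3, 5, 6, 3, 6, 2, 1])
    (hcVQ : cVQ = ![2, 2, 2, 2, 1, 1, 1]) (hcEQ : cEQ = ![2, 2, 2, 1, 1, 1, 1, 1, 1])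
    (p : Fin 10 → Fin 7) (hp : p = ![0, 4, 5, 6, 4, 5, 6, 1, 2, 3]) :
    Nat.card (gogJac sP tP cVP cEP) = 2000 ∧
    Nonempty (gogJac sQ tQ cVQ cEQ ≃+ ZMod 10 × ZMod 10) ∧
    Nat.card (gogJac sQ tQ cVQ cEQ) = 100 ∧
    ∃ φ : gogJac sP tP cVP cEP →+ gogJac sQ tQ cVQ cEQ,
      (∀ (x : LinearMap.ker (degHom (Fin 10))) (y : LinearMap.ker (degHom (Fin 7))),
        pushV p (x : Fin 10 → ℤ) = (y : Fin 7 → ℤ) →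
          φ (Submodule.Quotient.mk x) = Submodule.Quotient.mk y) ∧
      Nat.card φ.ker = 20 := by
  subst hsP htP hcVP hcEP hsQ htQ hcVQ hcEQ hp
  classical
  have hLapP : gogLap (![0, 0, 0, 1, 1, 1, 2, 2, 2, 3, 3, 3, 4, 5, 6] : Fin 15 → Fin 10)
      (![7, 8, 9, 5, 6, 9, 4, 6, 8, 4, 5, 7, 9, 8, 7] : Fin 15 → Fin 10)
      (fun _ => (1 : ℕ)) (fun _ => (1 : ℕ)) = Stmt19Aux.LP := by decide
  have hLapQ : gogLap (![0, 0, 0, 4, 4, 4, 5, 5, 6] : Fin 9 → Fin 7) (![1, 2, 3, 5, 6, 3, 6, 2, 1] : Fin 9 → Fin 7)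
      ![2, 2, 2, 2, 1, 1, 1] ![2, 2, 2, 1, 1, 1, 1, 1, 1] = Stmt19Aux.LQ := by decide
  delta gogJac
  rw [hLapP, hLapQ]
  have cardP : Nat.card (LinearMap.ker (degHom (Fin 10)) ⧸
      Submodule.comap (LinearMap.ker (degHom (Fin 10))).subtype
        (LinearMap.range Stmt19Aux.LP.mulVecLin)) = 2000 := by
    rw [Nat.card_congr Stmt19Aux.eP.toEquiv, Stmt19Aux.cardPiP]
  have cardQ : Nat.card (LinearMap.ker (degHom (Fin 7)) ⧸
      Submodule.comap (LinearMap.ker (degHom (Fin 7))).subtype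
        (LinearMap.range Stmt19Aux.LQ.mulVecLin)) = 100 := by
    rw [Nat.card_congr Stmt19Aux.eQ.toEquiv, Stmt19Aux.cardPiQ]
  refine ⟨cardP, ⟨Stmt19Aux.eQ.toAddEquiv.trans Stmt19Aux.lastTwo⟩, cardQ, ?_⟩
  -- the pushforward
  have hle : Submodule.comap (LinearMap.ker (degHom (Fin 10))).subtype
        (LinearMap.range Stmt19Aux.LP.mulVecLin) ≤
      Submodule.comap Stmt19Aux.Φ
        (Submodule.comap (LinearMap.ker (degHom (Fin 7))).subtype
          (LinearMap.range Stmt19Aux.LQ.mulVecLin)) := by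
    rintro x hx
    simp only [Submodule.mem_comap, Submodule.coe_subtype, LinearMap.mem_range] at hx ⊢
    obtain ⟨y, hy⟩ := hx
    refine ⟨Stmt19Aux.Mmat.mulVec y, ?_⟩
    rw [Stmt19Aux.Φ_apply, ← hy]
    rw [Matrix.mulVecLin_apply, Matrix.mulVecLin_apply, Matrix.mulVec_mulVec,
      Matrix.mulVec_mulVec, Stmt19Aux.hPMLP]
  set φlin := Submodule.mapQ _ _ Stmt19Aux.Φ hle with hφlin
  refine ⟨φlin.toAddMonoidHom, ?_, ?_⟩
  · intro x y hxy
    show φlin (Submodule.Quotient.mk x) = Submodule.Quotient.mk y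
    rw [hφlin, Submodule.mapQ_apply]
    congr 1
    apply Subtype.ext
    rw [Stmt19Aux.Φ_apply, ← Stmt19Aux.pushV_eq, hxy]
  · -- kernel cardinality
    have hsurj : Function.Surjective φlin.toAddMonoidHom := by
      intro q
      obtain ⟨y, rfl⟩ := Submodule.Quotient.mk_surjective _ q
      have hx1 : degHom (Fin 10) (Stmt19Aux.SM.mulVec (y : Fin 7 → ℤ)) = 0 := by
        rw [Stmt19Aux.deg_mulVec_colsum Stmt19Aux.SM Stmt19Aux.hcolSM]
        exact y.2
      refine ⟨Submodule.Quotient.mk ⟨Stmt19Aux.SM.mulVec (y : Fin 7 → ℤ), hx1⟩, ?_⟩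
      show φlin (Submodule.Quotient.mk _) = _
      rw [hφlin, Submodule.mapQ_apply]
      congr 1
      apply Subtype.ext
      rw [Stmt19Aux.Φ_apply]
      show Stmt19Aux.PM.mulVec (Stmt19Aux.SM.mulVec (y : Fin 7 → ℤ)) = (y : Fin 7 → ℤ)
      rw [Matrix.mulVec_mulVec, Stmt19Aux.hPMSM, Matrix.one_mulVec]
    haveI : Finite (LinearMap.ker (degHom (Fin 10)) ⧸
        Submodule.comap (LinearMap.ker (degHom (Fin 10))).subtype
          (LinearMap.range Stmt19Aux.LP.mulVecLin)) :=
      Nat.finite_of_card_ne_zero (by rw [cardP]; norm_num)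
    have hiso := QuotientAddGroup.quotientKerEquivOfSurjective φlin.toAddMonoidHom hsurj
    have hcard100 : Nat.card (_ ⧸ φlin.toAddMonoidHom.ker) = 100 := by
      rw [Nat.card_congr hiso.toEquiv, cardQ]
    have := AddSubgroup.card_eq_card_quotient_mul_card_addSubgroup φlin.toAddMonoidHom.ker
    rw [cardP, hcard100] at this
    omega
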